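/- Let P = Q + C ⊆ ℝ^d with Q a nonempty compact convex set and C a closed convex cone, and let x ∈ P be such that x is contained in some bounded face of P (equivalently, x minimizes some linear functional whose minimizer set over P is bounded). Then for every c ∈ C with c ≠ 0, we have x − c ∉ P. -/

import Mathlib

open Pointwise

/-- If `x` lies in a bounded face of `P = Q + C` (i.e. `x` minimizes some linear
functional whose minimizer set over `P` is bounded), then `x − c ∉ P` for every
nonzero `c` in the recession cone `C`. -/
theorem mem_bounded_face_sub_not_mem (d : ℕ) (Q C : Set (EuclideanSpace ℝ (Fin d)))
    (hQne : Q.Nonempty) (hQcpt : IsCompact Q) (hQconv : Convex ℝ Q)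
    (hCclosed : IsClosed C) (hCconv : Convex ℝ C)
    (hCcone : ∀ c ∈ C, ∀ l : ℝ, 0 ≤ l → l • c ∈ C)
    (x : EuclideanSpace ℝ (Fin d)) (hx : x ∈ Q + C)
    (hface : ∃ u : EuclideanSpace ℝ (Fin d),
      x ∈ {z ∈ Q + C | ∀ y ∈ Q + C, inner ℝ u z ≤ (inner ℝ u y : ℝ)} ∧
      Bornology.IsBounded {z ∈ Q + C | ∀ y ∈ Q + C, inner ℝ u z ≤ (inner ℝ u y : ℝ)}) :
    ∀ c ∈ C, c ≠ 0 → x - c ∉ Q + C := by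
  intro c hc hc0 hxc
  obtain ⟨u, ⟨hxP, hxmin⟩, hbdd⟩ := hface
  -- C is closed under addition
  have hCadd : ∀ a ∈ C, ∀ b ∈ C, a + b ∈ C := by
    intro a ha b hb
    have h := hCconv ha hb (a := (1:ℝ)/2) (b := (1:ℝ)/2) (by norm_num) (by norm_num) (by norm_num)
    have := hCcone _ h 2 (by norm_num)
    have e : (2:ℝ) • ((1/2 : ℝ) • a + (1/2 : ℝ) • b) = a + b := by
      rw [smul_add, smul_smul, smul_smul]; norm_num
    rwa [e] at this
  -- ray: x + t • c ∈ P for t ≥ 0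
  have hray : ∀ t : ℝ, 0 ≤ t → x + t • c ∈ Q + C := by
    intro t ht
    obtain ⟨q, hq, c', hc', rfl⟩ := hx
    exact ⟨q, hq, c' + t • c, hCadd _ hc' _ (hCcone _ hc _ ht), (add_assoc q c' (t • c)).symm⟩
  -- ⟨u, c⟩ ≤ 0 from x - c ∈ P
  have h1 : (inner ℝ u c : ℝ) ≤ 0 := by
    have := hxmin _ hxc
    simp only [inner_sub_right] at this
    linarith
  -- ⟨u, c⟩ ≥ 0 from x + c ∈ P
  have h2 : 0 ≤ (inner ℝ u c : ℝ) := by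
    have := hxmin _ (by simpa using hray 1 zero_le_one)
    simp only [inner_add_right, inner_smul_right] at this
    linarith
  have huc : (inner ℝ u c : ℝ) = 0 := le_antisymm h1 h2
  -- the ray is in the face
  have hrayF : ∀ t : ℝ, 0 ≤ t →
      x + t • c ∈ {z ∈ Q + C | ∀ y ∈ Q + C, inner ℝ u z ≤ (inner ℝ u y : ℝ)} := by
    intro t ht
    refine ⟨hray t ht, fun y hy => ?_⟩
    have := hxmin y hy
    simp only [inner_add_right, inner_smul_right, huc]
    linarith
  obtain ⟨r, hr⟩ := hbdd.exists_norm_le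
  have hcpos : 0 < ‖c‖ := norm_pos_iff.mpr hc0
  set t : ℝ := (r + ‖x‖ + 1) / ‖c‖ with ht
  have htpos : 0 ≤ t := by
    have : 0 ≤ r := le_trans (norm_nonneg _) (hr _ (hrayF 0 le_rfl))
    positivity
  have hle := hr _ (hrayF t htpos)
  have : t * ‖c‖ - ‖x‖ ≤ ‖x + t • c‖ := by
    have := norm_add_le x (-(t • c))
    have h' := norm_le_norm_add_norm_sub' (t • c) (-x)
    calc t * ‖c‖ - ‖x‖ = ‖t • c‖ - ‖x‖ := by
          rw [norm_smul, Real.norm_eq_abs, abs_of_nonneg htpos]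
      _ ≤ ‖x + t • c‖ := by
          have h := abs_norm_sub_norm_le (x + t • c) (t • c)
          have e : (x + t • c) - t • c = x := by abel
          rw [e] at h
          linarith [abs_le.mp h |>.1]
  have htc : t * ‖c‖ = r + ‖x‖ + 1 := div_mul_cancel₀ _ (ne_of_gt hcpos)
  linarith
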